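/- With the sequence μ constructed as follows — a₁ = 1, b_j = 2^{d_j}a_j, a_{j+1} = 2^j b_j with (2/A)^{d_j} ≤ 2^{-(j/2+1)} for fixed A > 2; μ_{a₁} = 2; μ constant equal to A^{i+1}μ_{a_j} on each block (2^i a_j, 2^{i+1}a_j]; and μ_k = 2^{1/(2·2^i b_j)} μ_{k−1} on each block (2^i b_j, 2^{i+1} b_j] — one has Σ_{k≥1} 1/μ_k < +∞ (non-quasianalyticity). -/

import Mathlib

open Filter

/-- A weight function: non-decreasing on `[0,∞)`, non-negative, tending to `+∞`. -/
def IsWeight (ω : ℝ → ℝ) : Prop :=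
  (∀ t, 0 ≤ ω t) ∧ MonotoneOn ω (Set.Ici (0 : ℝ)) ∧ Tendsto ω atTop atTop

/-- Property `P(ω,γ)`: there is `K > 1` with `limsup_{t→∞} ω(K^γ t)/ω(t) < K`. -/
def PropP (ω : ℝ → ℝ) (γ : ℝ) : Prop :=
  ∃ K : ℝ, 1 < K ∧ limsup (fun t => ω (K ^ γ * t) / ω t) atTop < K

/-- The growth index `γ(ω) = sup {γ > 0 : P(ω,γ)} ∈ [0,∞]` (`0` if the set is empty). -/
noncomputable def gammaIdx (ω : ℝ → ℝ) : ENNReal :=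
  ⨆ γ ∈ {γ : ℝ | 0 < γ ∧ PropP ω γ}, ENNReal.ofReal γ

private lemma dyadic_loc (c : ℕ) :
    ∀ m k, c < k → k ≤ 2 ^ m * c → ∃ i, i < m ∧ 2 ^ i * c < k ∧ k ≤ 2 ^ (i + 1) * c := by
  intro m
  induction m with
  | zero => intro k h1 h2; simp at h2; omega
  | succ m ih =>
    intro k h1 h2
    by_cases h : k ≤ 2 ^ m * c
    · obtain ⟨i, hi, h3, h4⟩ := ih k h1 h
      exact ⟨i, Nat.lt_succ_of_lt hi, h3, h4⟩
    · exact ⟨m, Nat.lt_succ_self m, Nat.lt_of_not_le h, h2⟩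

theorem mu_nonquasianalytic
(A : ℝ) (hA : 2 < A)
    (a b d : ℕ → ℕ) (μ : ℕ → ℝ)
    (hd : StrictMonoOn d (Set.Ici 1)) (hd1 : 1 ≤ d 1)
    (hdgrow : ∀ j ≥ 1, (2 / A) ^ (d j) ≤ 1 / (2 : ℝ) ^ ((j : ℝ) / 2 + 1))
    (ha1 : a 1 = 1)
    (hb : ∀ j ≥ 1, b j = 2 ^ (d j) * a j)
    (ha : ∀ j ≥ 1, a (j + 1) = 2 ^ j * b j)
    (hμa1 : μ (a 1) = 2)
    (hblock1 : ∀ j ≥ 1, ∀ i < d j, ∀ k, 2 ^ i * a j < k → k ≤ 2 ^ (i + 1) * a j →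
      μ k = A ^ (i + 1) * μ (a j))
    (hblock2 : ∀ j ≥ 1, ∀ i < j, ∀ k, 2 ^ i * b j < k → k ≤ 2 ^ (i + 1) * b j →
      μ k = (2 : ℝ) ^ ((1 : ℝ) / (2 * 2 ^ i * (b j : ℝ))) * μ (k - 1)) :
    Summable (fun k : ℕ => 1 / μ (k + 1)) := by
  have hA0 : (0:ℝ) < A := by linarith
  set s : ℝ := Real.sqrt 2 with hs
  have hs0 : (0:ℝ) < s := Real.sqrt_pos.mpr (by norm_num)
  have hs2 : s * s = 2 := Real.mul_self_sqrt (by norm_num)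
  have hs1 : (1:ℝ) < s := by nlinarith
  -- basic integer facts
  have haj1 : ∀ j, 1 ≤ j → 1 ≤ a j := by
    intro j hj
    induction j, hj using Nat.le_induction with
    | base => omega
    | succ j hj ih =>
      rw [ha j hj, hb j hj]
      have h1 : 1 ≤ 2 ^ j := Nat.one_le_two_pow
      have h2 : 1 ≤ 2 ^ (d j) := Nat.one_le_two_pow
      calc 1 ≤ 1 * (1 * a j) := by omega
        _ ≤ 2 ^ j * (2 ^ (d j) * a j) := by
            exact Nat.mul_le_mul h1 (Nat.mul_le_mul h2 le_rfl)
  have hbj1 : ∀ j, 1 ≤ j → 1 ≤ b j := by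
    intro j hj
    rw [hb j hj]
    exact le_trans (haj1 j hj) (Nat.le_mul_of_pos_left _ (Nat.two_pow_pos _))
  have hab : ∀ j, 1 ≤ j → a j ≤ b j := by
    intro j hj
    rw [hb j hj]
    exact Nat.le_mul_of_pos_left _ (Nat.two_pow_pos _)
  have hba : ∀ j, 1 ≤ j → b j ≤ a (j+1) := by
    intro j hj
    rw [ha j hj]
    exact Nat.le_mul_of_pos_left _ (Nat.two_pow_pos _)
  have haexp : ∀ j, 1 ≤ j → 2 ^ (j - 1) ≤ a j := by
    intro j hj
    induction j, hj using Nat.le_induction with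
    | base => simp [ha1]
    | succ j hj ih =>
      rw [ha j hj]
      have : 1 ≤ b j := hbj1 j hj
      have he : j + 1 - 1 = j := rfl
      rw [he]
      calc 2 ^ j = 2 ^ j * 1 := by omega
        _ ≤ 2 ^ j * b j := Nat.mul_le_mul le_rfl this
  -- value of μ at b j
  have Evb : ∀ j, 1 ≤ j → μ (b j) = A ^ (d j) * μ (a j) := by
    intro j hj
    rcases Nat.eq_zero_or_pos (d j) with hdj | hdj
    · rw [hb j hj, hdj]; simp
    · obtain ⟨i, hi⟩ : ∃ i, d j = i + 1 := ⟨d j - 1, by omega⟩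
      have haj := haj1 j hj
      have hlt : 2 ^ i * a j < 2 ^ (i + 1) * a j := by
        have h2 : (2:ℕ) ^ i < 2 ^ (i + 1) := Nat.pow_lt_pow_right (by norm_num) (by omega)
        exact Nat.mul_lt_mul_of_lt_of_le h2 le_rfl (by omega)
      have h := hblock1 j hj i (by omega) (2 ^ (i + 1) * a j) hlt le_rfl
      rw [hb j hj, hi]
      exact h
  -- within type-2 block
  have W : ∀ j, 1 ≤ j → ∀ i, i < j → ∀ k, 2 ^ i * b j ≤ k → k ≤ 2 ^ (i+1) * b j →
      μ k = (2:ℝ) ^ (((k:ℝ) - (2 ^ i * b j : ℕ)) / (2 * 2 ^ i * (b j:ℝ))) * μ (2 ^ i * b j) := by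
    intro j hj i hij k hk1
    induction k, hk1 using Nat.le_induction with
    | base =>
      intro _
      rw [sub_self, zero_div, Real.rpow_zero, one_mul]
    | succ k hk ih =>
      intro hk2
      have hbj : 1 ≤ b j := hbj1 j hj
      have hbjR : (0:ℝ) < (b j : ℝ) := by exact_mod_cast hbj
      have hμ := hblock2 j hj i hij (k + 1) (by omega) hk2
      rw [Nat.add_sub_cancel] at hμ
      have hk2' : k ≤ 2 ^ (i + 1) * b j := by omega
      rw [hμ, ih hk2', ← mul_assoc, ← Real.rpow_add (by norm_num : (0:ℝ) < 2)]
      congr 1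
      have hD : (2 * 2 ^ i * (b j : ℝ)) ≠ 0 := by positivity
      push_cast
      field_simp
      ring
  have W1 : ∀ j, 1 ≤ j → ∀ i, i < j → μ (2 ^ (i+1) * b j) = s * μ (2 ^ i * b j) := by
    intro j hj i hij
    have hbjR : (0:ℝ) < (b j : ℝ) := by exact_mod_cast hbj1 j hj
    have hle : 2 ^ i * b j ≤ 2 ^ (i + 1) * b j := by
      have h2 : (2:ℕ) ^ i ≤ 2 ^ (i + 1) := Nat.pow_le_pow_right (by norm_num) (by omega)
      exact Nat.mul_le_mul h2 le_rfl
    have h := W j hj i hij (2 ^ (i + 1) * b j) hle le_rfl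
    rw [h]
    congr 1
    rw [hs, Real.sqrt_eq_rpow]
    congr 1
    have h2i : (0:ℝ) < (2:ℝ) ^ i := by positivity
    push_cast
    rw [pow_succ]
    field_simp
    ring
  have V2 : ∀ j, 1 ≤ j → ∀ i, i ≤ j → μ (2 ^ i * b j) = s ^ i * μ (b j) := by
    intro j hj i
    induction i with
    | zero => intro _; simp
    | succ i ih =>
      intro hij
      have hi : i < j := by omega
      rw [W1 j hj i hi, ih (by omega), pow_succ]
      ring
  -- positivity
  have pos_a : ∀ j, 1 ≤ j → 0 < μ (a j) := by
    intro j hj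
    induction j, hj using Nat.le_induction with
    | base => rw [hμa1]; norm_num
    | succ j hj ih =>
      have h1 : μ (a (j + 1)) = s ^ j * μ (b j) := by
        rw [ha j hj]; exact V2 j hj j le_rfl
      rw [h1, Evb j hj]
      exact mul_pos (pow_pos hs0 j) (mul_pos (pow_pos hA0 _) ih)
  have pos_all : ∀ k, 1 ≤ k → 0 < μ k := by
    have pos_upto : ∀ j, 1 ≤ j → ∀ k, 1 ≤ k → k ≤ a j → 0 < μ k := by
      intro j hj
      induction j, hj using Nat.le_induction with
      | base =>
        intro k h1 h2
        rw [ha1] at h2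
        have hk1 : k = 1 := by omega
        subst hk1
        have : μ 1 = 2 := by have h := hμa1; rwa [ha1] at h
        rw [this]; norm_num
      | succ j hj ih =>
        intro k h1 h2
        by_cases hk : k ≤ a j
        · exact ih k h1 hk
        push_neg at hk
        by_cases hk2 : k ≤ b j
        · obtain ⟨i, hi, h3, h4⟩ := dyadic_loc (a j) (d j) k hk (by rw [← hb j hj]; exact hk2)
          rw [hblock1 j hj i hi k h3 h4]
          exact mul_pos (pow_pos hA0 _) (pos_a j hj)
        · push_neg at hk2
          have hk3 : k ≤ 2 ^ j * b j := by rw [← ha j hj]; exact h2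
          obtain ⟨i, hi, h3, h4⟩ := dyadic_loc (b j) j k hk2 hk3
          rw [W j hj i hi k h3.le h4]
          have h5 : 0 < μ (2 ^ i * b j) := by
            rw [V2 j hj i hi.le, Evb j hj]
            exact mul_pos (pow_pos hs0 _) (mul_pos (pow_pos hA0 _) (pos_a j hj))
          exact mul_pos (Real.rpow_pos_of_pos (by norm_num) _) h5
    intro k hk
    have h1 : k < 2 ^ k := Nat.lt_two_pow_self
    have h2 : 2 ^ k ≤ a (k + 1) := by
      have := haexp (k + 1) (by omega)
      simpa using this
    exact pos_upto (k + 1) (by omega) k hk (by omega)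
  -- growth of d
  have hdgrow' : ∀ j : ℕ, 1 ≤ j → (2:ℝ) ^ ((j:ℝ)/2 + 1) * 2 ^ (d j) ≤ A ^ (d j) := by
    intro j hj
    have h := hdgrow j hj
    rw [div_pow] at h
    have hq : (0:ℝ) < A ^ (d j) := pow_pos hA0 _
    have hp : (0:ℝ) < (2:ℝ) ^ ((j:ℝ)/2 + 1) := Real.rpow_pos_of_pos (by norm_num) _
    rw [div_le_div_iff₀ hq hp] at h
    calc (2:ℝ) ^ ((j:ℝ)/2 + 1) * 2 ^ (d j) = 2 ^ (d j) * (2:ℝ) ^ ((j:ℝ)/2 + 1) := by ring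
      _ ≤ 1 * A ^ (d j) := h
      _ = A ^ (d j) := one_mul _
  -- main lower bound
  have hsj : ∀ j : ℕ, s ^ j = (2:ℝ) ^ ((j:ℝ)/2) := by
    intro j
    rw [hs, Real.sqrt_eq_rpow, ← Real.rpow_natCast ((2:ℝ) ^ ((1:ℝ)/2)) j,
      ← Real.rpow_mul (by norm_num : (0:ℝ) ≤ 2)]
    congr 1
    ring
  have P : ∀ j, 1 ≤ j → (2:ℝ) ^ j * (a j : ℝ) ≤ μ (a j) := by
    intro j hj
    induction j, hj using Nat.le_induction with
    | base => rw [hμa1, ha1]; norm_num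
    | succ j hj ih =>
      have hv : μ (a (j + 1)) = s ^ j * (A ^ (d j) * μ (a j)) := by
        rw [ha j hj, V2 j hj j le_rfl, Evb j hj]
      have e1 : (2:ℝ) ^ ((j:ℝ)/2) * (2:ℝ) ^ ((j:ℝ)/2 + 1) = (2:ℝ) ^ (j + 1 : ℕ) := by
        rw [← Real.rpow_add (by norm_num : (0:ℝ) < 2), ← Real.rpow_natCast 2 (j + 1)]
        congr 1
        push_cast
        ring
      have hnn1 : (0:ℝ) ≤ (2:ℝ) ^ ((j:ℝ)/2) := (Real.rpow_pos_of_pos (by norm_num) _).le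
      have hnn2 : (0:ℝ) ≤ (2:ℝ) ^ j * (a j : ℝ) := by positivity
      have hnn3 : (0:ℝ) ≤ A ^ (d j) := pow_nonneg hA0.le _
      calc (2:ℝ) ^ (j + 1) * (a (j + 1) : ℝ)
          = (2:ℝ) ^ ((j:ℝ)/2) * (((2:ℝ) ^ ((j:ℝ)/2 + 1) * 2 ^ (d j)) * ((2:ℝ) ^ j * (a j : ℝ))) := by
            rw [ha j hj, hb j hj]
            push_cast
            rw [← e1]
            ring
        _ ≤ (2:ℝ) ^ ((j:ℝ)/2) * (A ^ (d j) * ((2:ℝ) ^ j * (a j : ℝ))) := by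
            apply mul_le_mul_of_nonneg_left _ hnn1
            exact mul_le_mul_of_nonneg_right (hdgrow' j hj) hnn2
        _ ≤ (2:ℝ) ^ ((j:ℝ)/2) * (A ^ (d j) * μ (a j)) := by
            apply mul_le_mul_of_nonneg_left _ hnn1
            exact mul_le_mul_of_nonneg_left ih hnn3
        _ = μ (a (j + 1)) := by rw [hv, hsj j]
  -- block sum bounds
  have BS1 : ∀ j, 1 ≤ j →
      ∑ k ∈ Finset.Ico (a j + 1) (b j + 1), 1 / μ k ≤ 1 / ((A - 2) * 2 ^ j) := by
    intro j hj
    have hapN := haj1 j hj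
    have hap : (0:ℝ) < (a j : ℝ) := by exact_mod_cast hapN
    have hμp : (0:ℝ) < μ (a j) := pos_a j hj
    have hPj := P j hj
    have hA2 : (0:ℝ) < A - 2 := by linarith
    have hAne : A ≠ 0 := ne_of_gt hA0
    have hA2ne : A - 2 ≠ 0 := ne_of_gt hA2
    -- sum over one dyadic sub-block
    have blockbound : ∀ i, i < d j →
        ∑ k ∈ Finset.Ico (2 ^ i * a j + 1) (2 ^ (i + 1) * a j + 1), 1 / μ k
          ≤ (2:ℝ) ^ i / (A ^ (i + 1) * 2 ^ j) := by
      intro i hi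
      have hconst : ∀ k ∈ Finset.Ico (2 ^ i * a j + 1) (2 ^ (i + 1) * a j + 1),
          1 / μ k = 1 / (A ^ (i + 1) * μ (a j)) := by
        intro k hk
        rw [Finset.mem_Ico] at hk
        rw [hblock1 j hj i hi k (by omega) (by omega)]
      rw [Finset.sum_congr rfl hconst, Finset.sum_const, Nat.card_Ico, nsmul_eq_mul]
      have hcard : 2 ^ (i + 1) * a j + 1 - (2 ^ i * a j + 1) = 2 ^ i * a j := by
        have h2 : 2 ^ (i + 1) * a j = 2 * (2 ^ i * a j) := by rw [pow_succ]; ring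
        omega
      rw [hcard]
      have hcast : ((2 ^ i * a j : ℕ) : ℝ) = (2:ℝ) ^ i * (a j : ℝ) := by push_cast; ring
      rw [hcast]
      have hApow : (0:ℝ) < A ^ (i + 1) := pow_pos hA0 _
      have hstep : 1 / (A ^ (i + 1) * μ (a j)) ≤ 1 / (A ^ (i + 1) * ((2:ℝ) ^ j * (a j : ℝ))) := by
        apply one_div_le_one_div_of_le
        · positivity
        · exact mul_le_mul_of_nonneg_left hPj hApow.le
      calc (2:ℝ) ^ i * (a j : ℝ) * (1 / (A ^ (i + 1) * μ (a j)))
          ≤ (2:ℝ) ^ i * (a j : ℝ) * (1 / (A ^ (i + 1) * ((2:ℝ) ^ j * (a j : ℝ)))) := by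
            exact mul_le_mul_of_nonneg_left hstep (by positivity)
        _ = (2:ℝ) ^ i / (A ^ (i + 1) * 2 ^ j) := by
            field_simp
    have claim1 : ∀ i, i ≤ d j →
        ∑ k ∈ Finset.Ico (a j + 1) (2 ^ i * a j + 1), 1 / μ k
          ≤ (1 / (A - 2)) * (1 - (2 / A) ^ i) * (1 / 2 ^ j) := by
      intro i
      induction i with
      | zero =>
        intro _
        rw [pow_zero, one_mul, pow_zero]
        simp
      | succ i ih =>
        intro hi1
        have hi : i < d j := by omega
        have hsplit := Finset.sum_Ico_consecutive (fun k => 1 / μ k)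
          (show a j + 1 ≤ 2 ^ i * a j + 1 by
            have : a j ≤ 2 ^ i * a j := Nat.le_mul_of_pos_left _ (Nat.two_pow_pos _)
            omega)
          (show 2 ^ i * a j + 1 ≤ 2 ^ (i + 1) * a j + 1 by
            have h2 : (2:ℕ) ^ i ≤ 2 ^ (i + 1) := Nat.pow_le_pow_right (by norm_num) (by omega)
            have := Nat.mul_le_mul h2 (le_refl (a j))
            omega)
        rw [← hsplit]
        have h1 := ih (by omega)
        have h2 := blockbound i hi
        have key : (1 / (A - 2)) * (1 - (2 / A) ^ (i + 1)) * (1 / 2 ^ j)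
            = (1 / (A - 2)) * (1 - (2 / A) ^ i) * (1 / 2 ^ j) + (2:ℝ) ^ i / (A ^ (i + 1) * 2 ^ j) := by
          rw [div_pow, div_pow]
          have hAp : (A:ℝ) ^ i ≠ 0 := pow_ne_zero _ hAne
          have hAp1 : (A:ℝ) ^ (i + 1) ≠ 0 := pow_ne_zero _ hAne
          field_simp
          ring
        rw [key]
        exact add_le_add h1 h2
    have hfin := claim1 (d j) le_rfl
    rw [← hb j hj] at hfin
    calc ∑ k ∈ Finset.Ico (a j + 1) (b j + 1), 1 / μ k
        ≤ (1 / (A - 2)) * (1 - (2 / A) ^ (d j)) * (1 / 2 ^ j) := hfin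
      _ ≤ (1 / (A - 2)) * 1 * (1 / 2 ^ j) := by
          apply mul_le_mul_of_nonneg_right _ (by positivity)
          apply mul_le_mul_of_nonneg_left _ (by positivity)
          have : (0:ℝ) ≤ (2 / A) ^ (d j) := by positivity
          linarith
      _ = 1 / ((A - 2) * 2 ^ j) := by
          rw [mul_one, div_mul_div_comm, one_mul]
  have BS2 : ∀ j, 1 ≤ j →
      ∑ k ∈ Finset.Ico (b j + 1) (a (j+1) + 1), 1 / μ k ≤ 2 * (1 / 2 ^ j) := by
    intro j hj
    have hbpN := hbj1 j hj
    have hbp : (0:ℝ) < (b j : ℝ) := by exact_mod_cast hbpN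
    have hTpos : (0:ℝ) < (2:ℝ) ^ (3 * (j:ℝ) / 2 + 1) := Real.rpow_pos_of_pos (by norm_num) _
    -- the key lower bound for μ k on (2^i b j, 2^{i+1} b j]
    have hTb : (2:ℝ) ^ (3 * (j:ℝ) / 2 + 1) * (b j : ℝ) ≤ A ^ (d j) * μ (a j) := by
      have e2 : (2:ℝ) ^ (3 * (j:ℝ) / 2 + 1) = (2:ℝ) ^ ((j:ℝ)/2 + 1) * (2:ℝ) ^ (j:ℕ) := by
        rw [← Real.rpow_natCast 2 j, ← Real.rpow_add (by norm_num : (0:ℝ) < 2)]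
        congr 1
        ring
      calc (2:ℝ) ^ (3 * (j:ℝ) / 2 + 1) * (b j : ℝ)
          = ((2:ℝ) ^ ((j:ℝ)/2 + 1) * 2 ^ (d j)) * ((2:ℝ) ^ j * (a j : ℝ)) := by
            rw [e2, hb j hj]
            push_cast
            ring
        _ ≤ A ^ (d j) * μ (a j) := by
            apply mul_le_mul (hdgrow' j hj) (P j hj) (by positivity)
            exact pow_nonneg hA0.le _
    have lower : ∀ i, i < j → ∀ k, 2 ^ i * b j < k → k ≤ 2 ^ (i + 1) * b j →
        s ^ i * ((2:ℝ) ^ (3 * (j:ℝ) / 2 + 1) * (b j : ℝ)) ≤ μ k := by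
      intro i hi k h1 h2
      rw [W j hj i hi k h1.le h2, V2 j hj i hi.le, Evb j hj]
      have hx : 0 ≤ ((k:ℝ) - ((2 ^ i * b j : ℕ) : ℝ)) / (2 * 2 ^ i * (b j : ℝ)) := by
        apply div_nonneg
        · have : ((2 ^ i * b j : ℕ) : ℝ) ≤ (k : ℝ) := by exact_mod_cast h1.le
          linarith
        · positivity
      have h2x : (1:ℝ) ≤ (2:ℝ) ^ (((k:ℝ) - ((2 ^ i * b j : ℕ) : ℝ)) / (2 * 2 ^ i * (b j : ℝ))) := by
        have := Real.rpow_le_rpow_of_exponent_le (by norm_num : (1:ℝ) ≤ 2) hx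
        rwa [Real.rpow_zero] at this
      have hnn : (0:ℝ) ≤ s ^ i * (A ^ (d j) * μ (a j)) := by
        have := pos_a j hj
        have := pow_pos hs0 i
        have := pow_pos hA0 (d j)
        positivity
      calc s ^ i * ((2:ℝ) ^ (3 * (j:ℝ) / 2 + 1) * (b j : ℝ))
          ≤ s ^ i * (A ^ (d j) * μ (a j)) :=
            mul_le_mul_of_nonneg_left hTb (pow_nonneg hs0.le i)
        _ = 1 * (s ^ i * (A ^ (d j) * μ (a j))) := (one_mul _).symm
        _ ≤ (2:ℝ) ^ (((k:ℝ) - ((2 ^ i * b j : ℕ) : ℝ)) / (2 * 2 ^ i * (b j : ℝ))) *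
              (s ^ i * (A ^ (d j) * μ (a j))) := mul_le_mul_of_nonneg_right h2x hnn
    have blockbound : ∀ i, i < j →
        ∑ k ∈ Finset.Ico (2 ^ i * b j + 1) (2 ^ (i + 1) * b j + 1), 1 / μ k
          ≤ s ^ i / (2:ℝ) ^ (3 * (j:ℝ) / 2 + 1) := by
      intro i hi
      have hspos : (0:ℝ) < s ^ i := pow_pos hs0 i
      have hlow : (0:ℝ) < s ^ i * ((2:ℝ) ^ (3 * (j:ℝ) / 2 + 1) * (b j : ℝ)) := by positivity
      have hterm : ∀ k ∈ Finset.Ico (2 ^ i * b j + 1) (2 ^ (i + 1) * b j + 1),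
          1 / μ k ≤ 1 / (s ^ i * ((2:ℝ) ^ (3 * (j:ℝ) / 2 + 1) * (b j : ℝ))) := by
        intro k hk
        rw [Finset.mem_Ico] at hk
        exact one_div_le_one_div_of_le hlow (lower i hi k (by omega) (by omega))
      calc ∑ k ∈ Finset.Ico (2 ^ i * b j + 1) (2 ^ (i + 1) * b j + 1), 1 / μ k
          ≤ ∑ _k ∈ Finset.Ico (2 ^ i * b j + 1) (2 ^ (i + 1) * b j + 1),
              1 / (s ^ i * ((2:ℝ) ^ (3 * (j:ℝ) / 2 + 1) * (b j : ℝ))) :=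
            Finset.sum_le_sum hterm
        _ = ((2 ^ i * b j : ℕ) : ℝ) * (1 / (s ^ i * ((2:ℝ) ^ (3 * (j:ℝ) / 2 + 1) * (b j : ℝ)))) := by
            rw [Finset.sum_const, Nat.card_Ico, nsmul_eq_mul]
            congr 2
            have h2 : 2 ^ (i + 1) * b j = 2 * (2 ^ i * b j) := by rw [pow_succ]; ring
            omega
        _ = s ^ i / (2:ℝ) ^ (3 * (j:ℝ) / 2 + 1) := by
            have hcast : ((2 ^ i * b j : ℕ) : ℝ) = (2:ℝ) ^ i * (b j : ℝ) := by push_cast; ring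
            have h2i : (2:ℝ) ^ i = s ^ i * s ^ i := by
              rw [← mul_pow, hs2]
            rw [hcast, h2i]
            field_simp
    have claim2 : ∀ i, i ≤ j →
        ∑ k ∈ Finset.Ico (b j + 1) (2 ^ i * b j + 1), 1 / μ k
          ≤ (∑ i' ∈ Finset.range i, s ^ i') / (2:ℝ) ^ (3 * (j:ℝ) / 2 + 1) := by
      intro i
      induction i with
      | zero =>
        intro _
        rw [pow_zero, one_mul]
        simp
      | succ i ih =>
        intro hi1
        have hi : i < j := by omega
        have hsplit := Finset.sum_Ico_consecutive (fun k => 1 / μ k)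
          (show b j + 1 ≤ 2 ^ i * b j + 1 by
            have : b j ≤ 2 ^ i * b j := Nat.le_mul_of_pos_left _ (Nat.two_pow_pos _)
            omega)
          (show 2 ^ i * b j + 1 ≤ 2 ^ (i + 1) * b j + 1 by
            have h2 : (2:ℕ) ^ i ≤ 2 ^ (i + 1) := Nat.pow_le_pow_right (by norm_num) (by omega)
            have := Nat.mul_le_mul h2 (le_refl (b j))
            omega)
        rw [← hsplit, Finset.sum_range_succ, add_div]
        exact add_le_add (ih (by omega)) (blockbound i hi)
    have gs : ∀ i : ℕ, ∑ i' ∈ Finset.range i, s ^ i' ≤ 3 * s ^ i := by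
      intro i
      induction i with
      | zero => simp
      | succ i ih =>
        rw [Finset.sum_range_succ, pow_succ]
        have hsi : (0:ℝ) < s ^ i := pow_pos hs0 i
        nlinarith [hs2, hs0, hs1]
    have hfin := claim2 j le_rfl
    rw [← ha j hj] at hfin
    calc ∑ k ∈ Finset.Ico (b j + 1) (a (j + 1) + 1), 1 / μ k
        ≤ (∑ i' ∈ Finset.range j, s ^ i') / (2:ℝ) ^ (3 * (j:ℝ) / 2 + 1) := hfin
      _ ≤ (3 * s ^ j) / (2:ℝ) ^ (3 * (j:ℝ) / 2 + 1) := by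
          gcongr
          exact gs j
      _ ≤ 2 * (1 / 2 ^ j) := by
          have hq : (2:ℝ) ^ ((j:ℝ)/2) / (2:ℝ) ^ (3 * (j:ℝ) / 2 + 1) = (1/2) * (1 / 2 ^ (j:ℕ)) := by
            rw [← Real.rpow_sub (by norm_num : (0:ℝ) < 2)]
            rw [show (j:ℝ)/2 - (3 * (j:ℝ)/2 + 1) = -(((j + 1 : ℕ)):ℝ) by push_cast; ring]
            rw [Real.rpow_neg (by norm_num), Real.rpow_natCast, pow_succ, mul_inv]
            ring
          calc (3 * s ^ j) / (2:ℝ) ^ (3 * (j:ℝ) / 2 + 1)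
              = 3 * ((2:ℝ) ^ ((j:ℝ)/2) / (2:ℝ) ^ (3 * (j:ℝ) / 2 + 1)) := by
                rw [hsj j]; ring
            _ = 3 * ((1/2) * (1 / 2 ^ (j:ℕ))) := by rw [hq]
            _ ≤ 2 * (1 / 2 ^ j) := by
                have h0 : (0:ℝ) ≤ 1 / 2 ^ (j:ℕ) := by positivity
                linarith
  set C : ℝ := 1 / (A - 2) + 2 with hC
  have hCpos : 0 < C := by
    have h2 : (0:ℝ) < A - 2 := by linarith
    have h3 : 0 < 1 / (A - 2) := by positivity
    rw [hC]
    linarith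
  have Btot : ∀ j, 1 ≤ j →
      ∑ k ∈ Finset.Ico (a j + 1) (a (j+1) + 1), 1 / μ k ≤ C * (1 / 2 ^ j) := by
    intro j hj
    have hsplit := Finset.sum_Ico_consecutive (fun k => 1 / μ k)
      (show a j + 1 ≤ b j + 1 by have := hab j hj; omega)
      (show b j + 1 ≤ a (j+1) + 1 by have := hba j hj; omega)
    rw [← hsplit]
    have h1 := BS1 j hj
    have h2 := BS2 j hj
    have h3 : 1 / ((A - 2) * 2 ^ j) = (1 / (A - 2)) * (1 / 2 ^ j) := by
      rw [eq_comm, div_mul_div_comm, one_mul]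
    rw [hC]
    calc (∑ k ∈ Finset.Ico (a j + 1) (b j + 1), 1 / μ k) +
        ∑ k ∈ Finset.Ico (b j + 1) (a (j+1) + 1), 1 / μ k
        ≤ (1 / (A - 2)) * (1 / 2 ^ j) + 2 * (1 / 2 ^ j) := by rw [← h3]; exact add_le_add h1 h2
      _ = (1 / (A - 2) + 2) * (1 / 2 ^ j) := by ring
  have G : ∀ J, 1 ≤ J →
      ∑ k ∈ Finset.Ico 1 (a (J+1) + 1), 1 / μ k ≤ 1/2 + C * (1 - 1 / 2 ^ J) := by
    intro J hJ
    induction J, hJ using Nat.le_induction with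
    | base =>
      have hsplit := Finset.sum_Ico_consecutive (fun k => 1 / μ k)
        (show (1:ℕ) ≤ a 1 + 1 by omega)
        (show a 1 + 1 ≤ a (1+1) + 1 by have := hab 1 le_rfl; have := hba 1 le_rfl; omega)
      rw [← hsplit]
      have h0 : ∑ k ∈ Finset.Ico 1 (a 1 + 1), 1 / μ k = 1/2 := by
        rw [ha1]
        simp [Finset.sum_Ico_eq_sum_range, ha1 ▸ hμa1]
      rw [h0]
      have := Btot 1 le_rfl
      have hc2 : C * (1 / 2 ^ 1) = C * (1 - 1 / 2 ^ 1) := by norm_num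
      linarith [this.trans_eq hc2]
    | succ J hJ ih =>
      have hsplit := Finset.sum_Ico_consecutive (fun k => 1 / μ k)
        (show (1:ℕ) ≤ a (J+1) + 1 by have := haj1 (J+1) (by omega); omega)
        (show a (J+1) + 1 ≤ a (J+1+1) + 1 by
          have := hab (J+1) (by omega); have := hba (J+1) (by omega); omega)
      rw [← hsplit]
      have h2 := Btot (J+1) (by omega)
      have hkey : C * (1 - 1 / 2 ^ J) + C * (1 / 2 ^ (J+1)) = C * (1 - 1 / 2 ^ (J+1)) := by
        have : (1:ℝ) / 2 ^ J = 2 / 2 ^ (J+1) := by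
          rw [pow_succ]; field_simp
        rw [this]; ring
      linarith
  -- conclusion
  have hnonneg : ∀ k : ℕ, 0 ≤ 1 / μ (k + 1) := by
    intro k
    have := pos_all (k+1) (by omega)
    positivity
  apply summable_of_sum_range_le (c := 1/2 + C) hnonneg
  intro n
  rcases Nat.eq_zero_or_pos n with hn | hn
  · subst hn; simp; positivity
  have hre : ∑ k ∈ Finset.range n, 1 / μ (k + 1) = ∑ k ∈ Finset.Ico 1 (n + 1), 1 / μ k := by
    rw [Finset.sum_Ico_eq_sum_range]
    simp [add_comm]
  rw [hre]
  have hsub : ∑ k ∈ Finset.Ico 1 (n + 1), 1 / μ k ≤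
      ∑ k ∈ Finset.Ico 1 (a (n+1) + 1), 1 / μ k := by
    apply Finset.sum_le_sum_of_subset_of_nonneg
    · apply Finset.Ico_subset_Ico le_rfl
      have h1 : n < 2 ^ n := Nat.lt_two_pow_self
      have h2 : 2 ^ n ≤ a (n+1) := by
        have := haexp (n+1) (by omega); simpa using this
      omega
    · intro k hk _
      have hk1 : 1 ≤ k := (Finset.mem_Ico.mp hk).1
      have := pos_all k hk1
      positivity
  have := G n hn
  have h3 : C * (1 - 1 / 2 ^ n) ≤ C := by
    have h4 : (0:ℝ) < 1 / 2 ^ n := by positivity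
    nlinarith [mul_pos hCpos h4]
  linarith
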